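/- Let f : 𝔹ⁿ → 𝔹ⁿ have no positive loop at v and let f̃ be the generalized reduced network. If Ã ⊆ 𝔹^{n-1} is an attractor of AD(f̃), then there exists at most one attractor of AD(f) intersecting π^{-1}(Ã). Consequently the number of attractors of AD(f) is at most the number of attractors of AD(f̃). -/

import Mathlib

open Function Relation

/-- Flip coordinate `i` of a Boolean state. -/
def flipc {V : Type*} [DecidableEq V] (x : V → Bool) (i : V) : V → Bool :=
  Function.update x i (!(x i))

/-- Transition relation of the asynchronous dynamics `AD f`. -/
def Step {V : Type*} [DecidableEq V] (f : (V → Bool) → V → Bool) (x y : V → Bool) : Prop :=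
  ∃ i, f x i ≠ x i ∧ y = flipc x i

/-- Trap set of the asynchronous dynamics. -/
def IsTrap {V : Type*} [DecidableEq V] (f : (V → Bool) → V → Bool) (T : Set (V → Bool)) : Prop :=
  ∀ x ∈ T, ∀ y, Step f x y → y ∈ T

/-- Attractor: minimal nonempty trap set. -/
def IsAttractor {V : Type*} [DecidableEq V] (f : (V → Bool) → V → Bool) (A : Set (V → Bool)) : Prop :=
  A.Nonempty ∧ IsTrap f A ∧ ∀ B ⊆ A, B.Nonempty → IsTrap f B → B = A

/-- `R(x)`: replace coordinate `v` by `f_v(x)`. -/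
def Rv {n : ℕ} (f : (Fin n → Bool) → Fin n → Bool) (v : Fin n) (x : Fin n → Bool) : Fin n → Bool :=
  Function.update x v (f x v)

/-- `R^a(x)`: replace coordinate `v` by `f_v(x^{v=a})`. -/
def Ra {n : ℕ} (f : (Fin n → Bool) → Fin n → Bool) (v : Fin n) (a : Bool) (x : Fin n → Bool) :
    Fin n → Bool :=
  Function.update x v (f (Function.update x v a) v)

/-- Projection forgetting coordinate `v`. -/
def proj {n : ℕ} (v : Fin n) (x : Fin n → Bool) : {i : Fin n // i ≠ v} → Bool :=
  fun i => x i.1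

/-- No loop at `v` in the interaction graph. -/
def NoLoop {n : ℕ} (f : (Fin n → Bool) → Fin n → Bool) (v : Fin n) : Prop :=
  ∀ x, f x v = f (flipc x v) v

/-- No positive loop at `v` in the interaction graph. -/
def NoPosLoop {n : ℕ} (f : (Fin n → Bool) → Fin n → Bool) (v : Fin n) : Prop :=
  ∀ x, f (Function.update x v true) v = true → f (Function.update x v false) v = true

/-- Boolean value as an integer. -/
def bint (b : Bool) : ℤ := if b then 1 else 0

/-- `G(f)` has an edge `j → i` of sign `s`. -/
def HasEdge {V : Type*} [DecidableEq V] (f : (V → Bool) → V → Bool) (j i : V) (s : ℤ) : Prop :=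
  ∃ x, (bint (f (flipc x j) i) - bint (f x i)) * (bint (!(x j)) - bint (x j)) = s


section AuxGeneral

variable {V : Type*} [DecidableEq V] {f : (V → Bool) → V → Bool}

lemma reach_mem_trap {A : Set (V → Bool)} (hA : IsTrap f A) {x y : V → Bool}
    (hx : x ∈ A) (h : ReflTransGen (Step f) x y) : y ∈ A := by
  induction h with
  | refl => exact hx
  | tail _ hstep ih => exact hA _ ih _ hstep

lemma reach_isTrap (f : (V → Bool) → V → Bool) (x : V → Bool) :
    IsTrap f {y | ReflTransGen (Step f) x y} := fun _ ha _ hb => ha.tail hb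

lemma attractor_reach {A : Set (V → Bool)} (hA : IsAttractor f A) {x y : V → Bool}
    (hx : x ∈ A) (hy : y ∈ A) : ReflTransGen (Step f) x y := by
  have hsub : {z | ReflTransGen (Step f) x z} ⊆ A := fun z hz => reach_mem_trap hA.2.1 hx hz
  have heq := hA.2.2 _ hsub ⟨x, ReflTransGen.refl⟩ (reach_isTrap f x)
  rw [← heq] at hy; exact hy

lemma attractor_eq_of_mem {A1 A2 : Set (V → Bool)} (h1 : IsAttractor f A1)
    (h2 : IsAttractor f A2) {z : V → Bool} (hz1 : z ∈ A1) (hz2 : z ∈ A2) : A1 = A2 := by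
  have hT : IsTrap f (A1 ∩ A2) := fun a ha b hb => ⟨h1.2.1 a ha.1 b hb, h2.2.1 a ha.2 b hb⟩
  have e1 := h1.2.2 _ Set.inter_subset_left ⟨z, hz1, hz2⟩ hT
  have e2 := h2.2.2 _ Set.inter_subset_right ⟨z, hz1, hz2⟩ hT
  exact e1.symm.trans e2

lemma exists_attractor_subset [Finite V] {T : Set (V → Bool)} (hT : IsTrap f T)
    (hne : T.Nonempty) : ∃ A ⊆ T, IsAttractor f A := by
  classical
  set S : Set (Set (V → Bool)) := {B | B ⊆ T ∧ B.Nonempty ∧ IsTrap f B} with hS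
  have hSfin : S.Finite := Set.toFinite S
  have hSne : S.Nonempty := ⟨T, subset_rfl, hne, hT⟩
  obtain ⟨A, hAS, hmin⟩ := hSfin.exists_minimal hSne
  refine ⟨A, hAS.1, hAS.2.1, hAS.2.2, ?_⟩
  intro B hBA hBne hBT
  exact Set.Subset.antisymm hBA (hmin ⟨hBA.trans hAS.1, hBne, hBT⟩ hBA)

end AuxGeneral

section AuxRed

variable {n : ℕ} {f : (Fin n → Bool) → Fin n → Bool} {v : Fin n}
  {S0 S1 : ({i : Fin n // i ≠ v} → Bool) → Fin n → Bool}
  {ft : ({i : Fin n // i ≠ v} → Bool) → {i : Fin n // i ≠ v} → Bool}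

lemma reach_Ra_self (f : (Fin n → Bool) → Fin n → Bool) (v : Fin n) (x : Fin n → Bool) :
    ReflTransGen (Step f) x (Ra f v (x v) x) := by
  have hx : Function.update x v (x v) = x := Function.update_eq_self v x
  by_cases h : f x v = x v
  · have he : Ra f v (x v) x = x := by
      unfold Ra; rw [hx, h, Function.update_eq_self]
    rw [he]
  · refine ReflTransGen.single ⟨v, h, ?_⟩
    unfold flipc Ra; rw [hx]
    revert h; cases hfv : f x v <;> cases hxv : x v <;> simp

lemma Ra_apply_ne (f : (Fin n → Bool) → Fin n → Bool) (v : Fin n) (a : Bool)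
    (x : Fin n → Bool) {j : Fin n} (hj : j ≠ v) : Ra f v a x j = x j :=
  Function.update_of_ne hj _ _

lemma proj_Ra (f : (Fin n → Bool) → Fin n → Bool) (v : Fin n) (a : Bool) (x : Fin n → Bool) :
    proj v (Ra f v a x) = proj v x := by
  funext j; exact Ra_apply_ne f v a x j.2

lemma reach_S (hv : NoPosLoop f v)
    (hS0 : ∀ x, S0 (proj v x) = Ra f v false x)
    (hS1 : ∀ x, S1 (proj v x) = Ra f v true x) (x : Fin n → Bool) :
    ReflTransGen (Step f) x (S0 (proj v x)) ∧ ReflTransGen (Step f) x (S1 (proj v x)) := by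
  rw [hS0 x, hS1 x]
  cases hb : x v with
  | false =>
    have h0 : ReflTransGen (Step f) x (Ra f v false x) := by
      have h := reach_Ra_self f v x; rwa [hb] at h
    refine ⟨h0, ?_⟩
    by_cases h1 : f (Function.update x v true) v = true
    · have h0' : f (Function.update x v false) v = true := hv x h1
      have he : Ra f v true x = Ra f v false x := by unfold Ra; rw [h1, h0']
      rwa [he]
    · have h1' : f (Function.update x v true) v = false := by
        revert h1; cases f (Function.update x v true) v <;> simp
      have he : Ra f v true x = x := by
        unfold Ra; rw [h1', ← hb, Function.update_eq_self]
      rw [he]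
  | true =>
    have h1 : ReflTransGen (Step f) x (Ra f v true x) := by
      have h := reach_Ra_self f v x; rwa [hb] at h
    refine ⟨?_, h1⟩
    by_cases h0 : f (Function.update x v false) v = true
    · have he : Ra f v false x = x := by
        unfold Ra; rw [h0, ← hb, Function.update_eq_self]
      rw [he]
    · have h0' : f (Function.update x v false) v = false := by
        revert h0; cases f (Function.update x v false) v <;> simp
      have h1' : f (Function.update x v true) v = false := by
        by_contra hc
        have hc' : f (Function.update x v true) v = true := by
          revert hc; cases f (Function.update x v true) v <;> simp
        rw [hv x hc'] at h0'; exact Bool.noConfusion h0'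
      have he : Ra f v false x = Ra f v true x := by unfold Ra; rw [h0', h1']
      rwa [he]

lemma lift_step (hv : NoPosLoop f v)
    (hS0 : ∀ x, S0 (proj v x) = Ra f v false x)
    (hS1 : ∀ x, S1 (proj v x) = Ra f v true x)
    (hft : ∀ y i, ft y i = if y i then f (S0 y) i.1 && f (S1 y) i.1
      else f (S0 y) i.1 || f (S1 y) i.1)
    {x : Fin n → Bool} {yt' : {i : Fin n // i ≠ v} → Bool}
    (hstep : Step ft (proj v x) yt') :
    ∃ x', ReflTransGen (Step f) x x' ∧ proj v x' = yt' := by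
  obtain ⟨i, hne, rfl⟩ := hstep
  obtain ⟨hr0, hr1⟩ := reach_S hv hS0 hS1 x
  have key : ∀ z : Fin n → Bool, proj v z = proj v x → ReflTransGen (Step f) x z →
      f z i.1 ≠ z i.1 → ∃ x', ReflTransGen (Step f) x x' ∧ proj v x' = flipc (proj v x) i := by
    intro z hz hr hzi
    refine ⟨flipc z i.1, hr.tail ⟨i.1, hzi, rfl⟩, ?_⟩
    funext j
    show flipc z i.1 j.1 = flipc (proj v x) i j
    unfold flipc
    by_cases hji : j = i
    · subst hji
      rw [Function.update_self, Function.update_self]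
      rw [← hz]; rfl
    · have hji' : j.1 ≠ i.1 := fun h => hji (Subtype.ext h)
      rw [Function.update_of_ne hji', Function.update_of_ne hji]
      rw [← hz]; rfl
  have hS0v : (S0 (proj v x)) i.1 = x i.1 := by rw [hS0]; exact Ra_apply_ne f v false x i.2
  have hS1v : (S1 (proj v x)) i.1 = x i.1 := by rw [hS1]; exact Ra_apply_ne f v true x i.2
  have hproj0 : proj v (S0 (proj v x)) = proj v x := by rw [hS0]; exact proj_Ra f v false x
  have hproj1 : proj v (S1 (proj v x)) = proj v x := by rw [hS1]; exact proj_Ra f v true x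
  have hfti := hft (proj v x) i
  have hyi : (proj v x) i = x i.1 := rfl
  rw [hyi] at hne hfti
  cases hxi : x i.1 with
  | true =>
    rw [hxi] at hne hfti
    simp only [if_true] at hfti
    rw [hfti] at hne
    have hor : f (S0 (proj v x)) i.1 = false ∨ f (S1 (proj v x)) i.1 = false := by
      revert hne; cases f (S0 (proj v x)) i.1 <;> cases f (S1 (proj v x)) i.1 <;> simp
    rcases hor with h | h
    · exact key _ hproj0 hr0 (by rw [h, hS0v, hxi]; simp)
    · exact key _ hproj1 hr1 (by rw [h, hS1v, hxi]; simp)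
  | false =>
    rw [hxi] at hne hfti
    simp only [Bool.false_eq_true, if_false] at hfti
    rw [hfti] at hne
    have hor : f (S0 (proj v x)) i.1 = true ∨ f (S1 (proj v x)) i.1 = true := by
      revert hne; cases f (S0 (proj v x)) i.1 <;> cases f (S1 (proj v x)) i.1 <;> simp
    rcases hor with h | h
    · exact key _ hproj0 hr0 (by rw [h, hS0v, hxi]; simp)
    · exact key _ hproj1 hr1 (by rw [h, hS1v, hxi]; simp)

lemma lift_path (hv : NoPosLoop f v)
    (hS0 : ∀ x, S0 (proj v x) = Ra f v false x)
    (hS1 : ∀ x, S1 (proj v x) = Ra f v true x)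
    (hft : ∀ y i, ft y i = if y i then f (S0 y) i.1 && f (S1 y) i.1
      else f (S0 y) i.1 || f (S1 y) i.1)
    {x : Fin n → Bool} {yt yt' : {i : Fin n // i ≠ v} → Bool} (hy : proj v x = yt)
    (h : ReflTransGen (Step ft) yt yt') :
    ∃ x', ReflTransGen (Step f) x x' ∧ proj v x' = yt' := by
  induction h with
  | refl => exact ⟨x, ReflTransGen.refl, hy⟩
  | tail _ hstep ih =>
    obtain ⟨x', hr, hp⟩ := ih
    obtain ⟨x'', hr', hp'⟩ := lift_step hv hS0 hS1 hft (by rw [hp]; exact hstep)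
    exact ⟨x'', hr.trans hr', hp'⟩

end AuxRed

theorem stmt14 (n : ℕ) (f : (Fin n → Bool) → Fin n → Bool) (v : Fin n)
    (hv : NoPosLoop f v)
    (S0 S1 : ({i : Fin n // i ≠ v} → Bool) → Fin n → Bool)
    (hS0 : ∀ x, S0 (proj v x) = Ra f v false x)
    (hS1 : ∀ x, S1 (proj v x) = Ra f v true x)
    (ft : ({i : Fin n // i ≠ v} → Bool) → {i : Fin n // i ≠ v} → Bool)
    (hft : ∀ y i, ft y i = if y i then f (S0 y) i.1 && f (S1 y) i.1 else f (S0 y) i.1 || f (S1 y) i.1) :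
    (∀ At : Set ({i : Fin n // i ≠ v} → Bool), IsAttractor ft At →
      ∀ A1 A2 : Set (Fin n → Bool), IsAttractor f A1 → IsAttractor f A2 →
        (A1 ∩ proj v ⁻¹' At).Nonempty → (A2 ∩ proj v ⁻¹' At).Nonempty → A1 = A2) ∧
    Nat.card {A : Set (Fin n → Bool) | IsAttractor f A} ≤
      Nat.card {B : Set ({i : Fin n // i ≠ v} → Bool) | IsAttractor ft B} := by
  have part1 : ∀ At : Set ({i : Fin n // i ≠ v} → Bool), IsAttractor ft At →
      ∀ A1 A2 : Set (Fin n → Bool), IsAttractor f A1 → IsAttractor f A2 →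
        (A1 ∩ proj v ⁻¹' At).Nonempty → (A2 ∩ proj v ⁻¹' At).Nonempty → A1 = A2 := by
    rintro At hAt A1 A2 hA1 hA2 ⟨x1, hx1A, hx1p⟩ ⟨x2, hx2A, hx2p⟩
    have hpath : ReflTransGen (Step ft) (proj v x1) (proj v x2) :=
      attractor_reach hAt hx1p hx2p
    obtain ⟨x', hr, hp⟩ := lift_path hv hS0 hS1 hft rfl hpath
    have hx'A1 : x' ∈ A1 := reach_mem_trap hA1.2.1 hx1A hr
    obtain ⟨h1, -⟩ := reach_S hv hS0 hS1 x'
    obtain ⟨h2, -⟩ := reach_S hv hS0 hS1 x2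
    rw [hp] at h1
    have hz1 : S0 (proj v x2) ∈ A1 := reach_mem_trap hA1.2.1 hx'A1 h1
    have hz2 : S0 (proj v x2) ∈ A2 := reach_mem_trap hA2.2.1 hx2A h2
    exact attractor_eq_of_mem hA1 hA2 hz1 hz2
  refine ⟨part1, ?_⟩
  classical
  have hmap : ∀ A : Set (Fin n → Bool), IsAttractor f A →
      ∃ B, IsAttractor ft B ∧ (A ∩ proj v ⁻¹' B).Nonempty := by
    intro A hA
    have htrap : IsTrap ft (proj v '' A) := by
      rintro yt ⟨x, hx, rfl⟩ yt' hstep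
      obtain ⟨x', hr, hp⟩ := lift_step hv hS0 hS1 hft hstep
      exact ⟨x', reach_mem_trap hA.2.1 hx hr, hp⟩
    obtain ⟨B, hBsub, hB⟩ := exists_attractor_subset htrap (hA.1.image _)
    obtain ⟨yt, hyt⟩ := hB.1
    obtain ⟨x, hx, hpx⟩ := hBsub hyt
    exact ⟨B, hB, x, hx, by rw [Set.mem_preimage, hpx]; exact hyt⟩
  choose! Phi hPhi1 hPhi2 using hmap
  have hinj : Function.Injective
      (fun A : ↥{A : Set (Fin n → Bool) | IsAttractor f A} =>
        (⟨Phi A.1, hPhi1 A.1 A.2⟩ : ↥{B : Set ({i : Fin n // i ≠ v} → Bool) | IsAttractor ft B})) := by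
    intro A1 A2 h
    have hB : Phi A1.1 = Phi A2.1 := congrArg Subtype.val h
    apply Subtype.ext
    exact part1 (Phi A1.1) (hPhi1 _ A1.2) A1.1 A2.1 A1.2 A2.2 (hPhi2 _ A1.2)
      (by rw [hB]; exact hPhi2 _ A2.2)
  exact Nat.card_le_card_of_injective _ hinj
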